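/- Assume the primal–dual setup with 2α ≥ β, let δ > 0, 1 ≤ k ≤ n, set η = μ/(2L), and suppose 5Rδk/(μn²) ≤ 1. Suppose x^t ∈ C, y^{t−1} ∈ ℝ^n, and that one step of the Primal–Dual Block Frank–Wolfe method with step sizes η, δ and block size k produces x̄^t, I, y^t, x̃^t, x^{t+1}. Define Δ_d^t = D* − D(y^t), Δ_d^{t−1} = D* − D(y^{t−1}), Δ_p^t = L(x^{t+1}, y^t) − D(y^t), Δ_p^{t−1} = L(x^t, y^{t−1}) − D(y^{t−1}). Then Δ_d^t − Δ_d^{t−1} + Δ_p^t − Δ_p^{t−1} ≤ −(kδ/(2nβ))·Δ_d^t − ((1 − 5Rδk/(μn²))·(μ/(4L)) − 5Rδk/(μn²))·Δ_p^t. -/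

import Mathlib

open RealInnerProductSpace

private lemma inner_euc {m : ℕ} (x y : EuclideanSpace ℝ (Fin m)) :
    ⟪x, y⟫ = ∑ i, x i * y i := by
  simp [PiLp.inner_apply, RCLike.inner_apply, conj_trivial]
  exact Finset.sum_congr rfl fun i _ => mul_comm _ _

private lemma normsq_euc {m : ℕ} (x : EuclideanSpace ℝ (Fin m)) :
    ‖x‖ ^ 2 = ∑ i, (x i) ^ 2 := by
  rw [← real_inner_self_eq_norm_sq]
  simp only [PiLp.inner_apply, RCLike.inner_apply, conj_trivial, sq]

private theorem descent_lemma_aux {E : Type*} [NormedAddCommGroup E] [InnerProductSpace ℝ E]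
    [CompleteSpace E]
    (f : E → ℝ) (f' : E → E) (hd : ∀ y, HasGradientAt f (f' y) y)
    (c : ℝ) (hlip : ∀ u v, ‖f' u - f' v‖ ≤ c * ‖u - v‖) (u v : E) :
    f v ≤ f u + ⟪f' u, v - u⟫ + c / 2 * ‖v - u‖ ^ 2 := by
  set ψ : ℝ → ℝ := fun t => f (u + t • (v - u)) - t * ⟪f' u, v - u⟫ - c * t ^ 2 / 2 * ‖v - u‖ ^ 2 with hψ
  have hder : ∀ t : ℝ, HasDerivAt ψ
      (⟪f' (u + t • (v - u)), v - u⟫ - ⟪f' u, v - u⟫ - c * t * ‖v - u‖ ^ 2) t := by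
    intro t
    have hline : HasDerivAt (fun t : ℝ => u + t • (v - u)) (v - u) t := by
      simpa using ((hasDerivAt_id t).smul_const (v - u)).const_add u
    have h1 : HasDerivAt (fun t : ℝ => f (u + t • (v - u))) ⟪f' (u + t • (v - u)), v - u⟫ t := by
      have := (hd (u + t • (v - u))).hasFDerivAt.comp_hasDerivAt t hline
      simpa [InnerProductSpace.toDual_apply_apply, Function.comp_def] using this
    have h2 : HasDerivAt (fun t : ℝ => t * ⟪f' u, v - u⟫) ⟪f' u, v - u⟫ t := by
      simpa using (hasDerivAt_id t).mul_const ⟪f' u, v - u⟫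
    have h3 : HasDerivAt (fun t : ℝ => c * t ^ 2 / 2 * ‖v - u‖ ^ 2) (c * t * ‖v - u‖ ^ 2) t := by
      have hp : HasDerivAt (fun t : ℝ => t ^ 2) (2 * t) t := by
        simpa using hasDerivAt_pow 2 t
      have := ((hp.const_mul c).div_const 2).mul_const (‖v - u‖ ^ 2)
      rw [show c * (2 * t) / 2 * ‖v - u‖ ^ 2 = c * t * ‖v - u‖ ^ 2 by ring] at this
      exact this
    exact (h1.sub h2).sub h3
  have hanti : AntitoneOn ψ (Set.Icc (0:ℝ) 1) := by
    apply antitoneOn_of_deriv_nonpos (convex_Icc 0 1)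
    · exact Continuous.continuousOn (by
        have : Differentiable ℝ ψ := fun t => (hder t).differentiableAt
        exact this.continuous)
    · intro t _
      exact (hder t).differentiableAt.differentiableWithinAt
    · intro t ht
      rw [(hder t).deriv]
      rw [interior_Icc] at ht
      have key : ⟪f' (u + t • (v - u)) - f' u, v - u⟫ ≤ c * t * ‖v - u‖ ^ 2 := by
        calc ⟪f' (u + t • (v - u)) - f' u, v - u⟫ ≤ ‖f' (u + t • (v - u)) - f' u‖ * ‖v - u‖ :=
              real_inner_le_norm _ _
          _ ≤ (c * ‖(u + t • (v - u)) - u‖) * ‖v - u‖ :=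
              mul_le_mul_of_nonneg_right (hlip _ _) (norm_nonneg _)
          _ = c * t * ‖v - u‖ ^ 2 := by
              rw [add_sub_cancel_left, norm_smul]
              simp only [Real.norm_eq_abs, abs_of_pos ht.1]
              ring
      rw [inner_sub_left] at key
      linarith
  have h01 := hanti (Set.mem_Icc.2 ⟨le_refl 0, zero_le_one⟩)
    (Set.mem_Icc.2 ⟨zero_le_one, le_refl 1⟩) zero_le_one
  simp only [hψ, one_smul, zero_smul, add_zero, add_sub_cancel] at h01
  norm_num at h01
  linarith

set_option maxHeartbeats 1000000 in
private theorem final_arith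
    (S X T Ev η μ L α β δ kk nn R : ℝ)
    (Dyt Dyp Ds Lxtyt Lxtyp Lxnyt : ℝ)
    (hμ : 0 < μ) (hμL : μ ≤ L) (hβ : 0 < β) (hα : 0 < α) (hαβ : β ≤ 2 * α)
    (hδ : 0 < δ) (hη : η = μ / (2 * L))
    (hq1 : 5 * R * δ * kk / (μ * nn ^ 2) ≤ 1)
    (hkk : 0 < kk) (hnn : 0 < nn) (hR : 0 ≤ R)
    (hS : 0 ≤ S) (hX : 0 ≤ X)
    (hLch : Lxtyt - Lxtyp ≤ δ * S + δ ^ 2 / (2 * α) * S)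
    (hDch : Dyp - Dyt ≤ -δ * (S + T) - δ ^ 2 / (2 * β) * S)
    (hT : -(2 * T) ≤ 1 / 2 * S + 2 * Ev)
    (hE : Ev ≤ kk * R / nn ^ 2 * X)
    (hgap : kk * δ / (2 * nn * β) * (Ds - Dyt) ≤ δ / 2 * S + kk * δ * R / (2 * nn ^ 2) * X)
    (hP : Lxnyt - Lxtyt ≤ -η * (Lxtyt - Dyt) - η * μ / 4 * X)
    (hPh : μ / 2 * X ≤ Lxtyt - Dyt) :
    ((Ds - Dyt) - (Ds - Dyp)) + ((Lxnyt - Dyt) - (Lxtyp - Dyp)) ≤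
      -(kk * δ / (2 * nn * β)) * (Ds - Dyt) -
        ((1 - 5 * R * δ * kk / (μ * nn ^ 2)) * (μ / (4 * L)) -
            5 * R * δ * kk / (μ * nn ^ 2)) * (Lxnyt - Dyt) := by
  have hL0 : 0 < L := hμ.trans_le hμL
  have hη0 : 0 < η := by rw [hη]; positivity
  have hηhalf : η ≤ 1 / 2 := by
    rw [hη, div_le_div_iff₀ (by positivity) (by norm_num)]
    nlinarith
  obtain ⟨q, hqdef⟩ : ∃ q : ℝ, q = 5 * R * δ * kk / (μ * nn ^ 2) := ⟨_, rfl⟩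
  rw [← hqdef] at hq1 ⊢
  have hq0 : 0 ≤ q := by rw [hqdef]; positivity
  have hμ4L : μ / (4 * L) = η / 2 := by
    rw [hη, div_div]; ring_nf
  rw [hμ4L]
  obtain ⟨c2, hc2def⟩ : ∃ c : ℝ, c = (1 - q) * (η / 2) - q := ⟨_, rfl⟩
  rw [← hc2def]
  have h1c2 : 0 ≤ 1 + c2 := by
    have h1 : 0 ≤ (1 - q) * η := mul_nonneg (by linarith) hη0.le
    rw [hc2def]; nlinarith
  have hq5 : q * μ = 5 * R * δ * kk / nn ^ 2 := by
    rw [hqdef]; field_simp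
  have m1 : δ * (-(2 * T)) ≤ δ * (1 / 2 * S + 2 * Ev) := mul_le_mul_of_nonneg_left hT hδ.le
  have m2 : 2 * δ * Ev ≤ 2 * δ * (kk * R / nn ^ 2 * X) :=
    mul_le_mul_of_nonneg_left hE (by positivity)
  have m3 : δ ^ 2 / (2 * α) * S ≤ δ ^ 2 / β * S := by
    apply mul_le_mul_of_nonneg_right _ hS
    rw [div_le_div_iff₀ (by positivity) hβ]
    nlinarith [sq_nonneg δ]
  have hXterm : 2 * δ * (kk * R / nn ^ 2 * X) + kk * δ * R / (2 * nn ^ 2) * X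
      = q * μ / 2 * X := by
    linear_combination (-(X / 2)) * hq5
  have hdual : 2 * (Dyp - Dyt) + (Lxtyt - Lxtyp) + kk * δ / (2 * nn * β) * (Ds - Dyt)
      ≤ q * μ / 2 * X := by
    ring_nf at hLch hDch m1 m2 m3 hgap hXterm ⊢
    linarith only [hLch, hDch, m1, m2, m3, hgap, hXterm]
  have k1 : (1 + c2) * (Lxnyt - Lxtyt) ≤ (1 + c2) * (-η * (Lxtyt - Dyt) - η * μ / 4 * X) :=
    mul_le_mul_of_nonneg_left hP h1c2
  have hA : c2 - (1 + c2) * η ≤ 0 := by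
    have h1 : 0 ≤ (1 - q) * η := mul_nonneg (by linarith) hη0.le
    have h2 : 0 ≤ q * η := mul_nonneg hq0 hη0.le
    have h3 : 0 ≤ (1 - q) * η * η := mul_nonneg h1 hη0.le
    rw [hc2def]; nlinarith
  have k2 : (c2 - (1 + c2) * η) * (Lxtyt - Dyt) ≤ (c2 - (1 + c2) * η) * (μ / 2 * X) :=
    mul_le_mul_of_nonpos_left hPh hA
  have hcoef : q * μ / 2 + (c2 - (1 + c2) * η) * (μ / 2) - (1 + c2) * (η * μ / 4) ≤ 0 := by
    have h1 : 0 ≤ (1 - q) * η * μ :=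
      mul_nonneg (mul_nonneg (by linarith) hη0.le) hμ.le
    have h2 : 0 ≤ (1 - q) * η * η * μ :=
      mul_nonneg (mul_nonneg (mul_nonneg (by linarith) hη0.le) hη0.le) hμ.le
    rw [hc2def]; nlinarith
  have hcoefX : (q * μ / 2 + (c2 - (1 + c2) * η) * (μ / 2) - (1 + c2) * (η * μ / 4)) * X ≤ 0 := by
    have := mul_le_mul_of_nonneg_right hcoef hX
    simpa using this
  ring_nf at hdual k1 k2 hcoefX ⊢
  linarith only [hdual, k1, k2, hcoefX]
set_option maxHeartbeats 400000 in
theorem stmt_10 {n d : ℕ} (a : Fin n → EuclideanSpace ℝ (Fin d)) (R : ℝ)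
    (hR : ∀ i, ‖a i‖ ^ 2 ≤ R)
    (g : EuclideanSpace ℝ (Fin d) → ℝ)
    (g' : EuclideanSpace ℝ (Fin d) → EuclideanSpace ℝ (Fin d))
    (μ L : ℝ) (hμ : 0 < μ) (hμL : μ ≤ L)
    (hgdiff : ∀ x, HasGradientAt g (g' x) x)
    (hgsc : ∀ u v, g u + ⟪g' u, v - u⟫ + μ / 2 * ‖v - u‖ ^ 2 ≤ g v)
    (hgsm : ∀ u v, g v ≤ g u + ⟪g' u, v - u⟫ + L / 2 * ‖v - u‖ ^ 2)
    (φ : EuclideanSpace ℝ (Fin n) → ℝ)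
    (φ' : EuclideanSpace ℝ (Fin n) → EuclideanSpace ℝ (Fin n))
    (α : ℝ) (hα : 0 < α)
    (hφdiff : ∀ y, HasGradientAt φ (φ' y) y)
    (hφconv : ConvexOn ℝ Set.univ φ)
    (hφlip : ∀ u v, ‖φ' u - φ' v‖ ≤ (1 / α) * ‖u - v‖)
    (Lag : EuclideanSpace ℝ (Fin d) → EuclideanSpace ℝ (Fin n) → ℝ)
    (hLag : ∀ x y, Lag x y = g x + (1 / n : ℝ) * (∑ i, y i * ⟪a i, x⟫) - φ y)
    (C : Set (EuclideanSpace ℝ (Fin d)))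
    (hCne : C.Nonempty) (hCcl : IsClosed C) (hCconv : Convex ℝ C)
    (D : EuclideanSpace ℝ (Fin n) → ℝ)
    (hD : ∀ y, IsLeast ((fun x => Lag x y) '' C) (D y))
    (D' : EuclideanSpace ℝ (Fin n) → EuclideanSpace ℝ (Fin n))
    (β : ℝ) (hβ : 0 < β)
    (hDdiff : ∀ y, HasGradientAt D (D' y) y)
    (hDsc : ∀ u v, (-D u) + ⟪-D' u, v - u⟫ + (1 / β) / 2 * ‖v - u‖ ^ 2 ≤ -D v)
    (Dstar : ℝ) (hDub : ∀ y, D y ≤ Dstar) (hDatt : ∃ y, D y = Dstar)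
    -- 2α ≥ β
    (hαβ : β ≤ 2 * α)
    (δ : ℝ) (hδ : 0 < δ) (k : ℕ) (hk1 : 1 ≤ k) (hkn : k ≤ n)
    (η : ℝ) (hη : η = μ / (2 * L))
    (hq : 5 * R * δ * k / (μ * n ^ 2) ≤ 1)
    -- state
    (xt : EuclideanSpace ℝ (Fin d)) (hxtC : xt ∈ C)
    (yprev : EuclideanSpace ℝ (Fin n))
    -- (i) dual-optimal primal point
    (yt : EuclideanSpace ℝ (Fin n))
    (xbar : EuclideanSpace ℝ (Fin d)) (hxbarC : xbar ∈ C)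
    (hxbarD : D yt = Lag xbar yt)
    (hgradD : ∀ i, D' yt i = (1 / n : ℝ) * ⟪a i, xbar⟫ - φ' yt i)
    -- (ii) greedy block dual update with w i = (1/n)⟪a i, xt⟫ - φ' yt i
    (I : Finset (Fin n)) (hI : I.card = k)
    (hgreedy : ∀ J : Finset (Fin n), J.card = k →
        ∑ i ∈ J, ((1 / n : ℝ) * ⟪a i, xt⟫ - φ' yt i) ^ 2 ≤
          ∑ i ∈ I, ((1 / n : ℝ) * ⟪a i, xt⟫ - φ' yt i) ^ 2)
    (hin : ∀ i ∈ I, yt i = yprev i + δ * ((1 / n : ℝ) * ⟪a i, xt⟫ - φ' yt i))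
    (hout : ∀ i ∉ I, yt i = yprev i)
    -- (iii) block Frank-Wolfe primal update
    (xtil : EuclideanSpace ℝ (Fin d)) (hxtilC : xtil ∈ C)
    (hfw : ⟪g' xt + (n : ℝ)⁻¹ • ∑ i, yt i • a i, xtil⟫
          + L * η / 2 * ‖xtil - xt‖ ^ 2 ≤
        ⟪g' xt + (n : ℝ)⁻¹ • ∑ i, yt i • a i, xbar⟫
          + L * η / 2 * ‖xbar - xt‖ ^ 2)
    (xnext : EuclideanSpace ℝ (Fin d)) (hxnext : xnext = (1 - η) • xt + η • xtil) :
    ((Dstar - D yt) - (Dstar - D yprev)) +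
        ((Lag xnext yt - D yt) - (Lag xt yprev - D yprev)) ≤
      -(k * δ / (2 * n * β) : ℝ) * (Dstar - D yt) -
        ((1 - 5 * R * δ * k / (μ * n ^ 2)) * (μ / (4 * L)) -
            5 * R * δ * k / (μ * n ^ 2)) * (Lag xnext yt - D yt) := by
  have hnp : 0 < n := hk1.trans hkn
  have hnR : (0:ℝ) < (n:ℝ) := by exact_mod_cast hnp
  have hkRe : (0:ℝ) < (k:ℝ) := by exact_mod_cast hk1
  have hL0 : 0 < L := hμ.trans_le hμL
  have hη0 : 0 < η := by rw [hη]; positivity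
  have hR0 : 0 ≤ R := le_trans (sq_nonneg ‖a ⟨0, hnp⟩‖) (hR ⟨0, hnp⟩)
  -- key scalar quantities
  obtain ⟨w, hwdef⟩ : ∃ w : Fin n → ℝ, w = fun i => (1 / n : ℝ) * ⟪a i, xt⟫ - φ' yt i :=
    ⟨_, rfl⟩
  obtain ⟨ev, hevdef⟩ : ∃ ev : Fin n → ℝ,
      ev = fun i => (1 / n : ℝ) * ⟪a i, xbar⟫ - (1 / n : ℝ) * ⟪a i, xt⟫ := ⟨_, rfl⟩
  obtain ⟨S, hSdef⟩ : ∃ S : ℝ, S = ∑ i ∈ I, (w i) ^ 2 := ⟨_, rfl⟩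
  obtain ⟨T, hTdef⟩ : ∃ T : ℝ, T = ∑ i ∈ I, ev i * w i := ⟨_, rfl⟩
  obtain ⟨Ev, hEvdef⟩ : ∃ Ev : ℝ, Ev = ∑ i ∈ I, (ev i) ^ 2 := ⟨_, rfl⟩
  obtain ⟨X, hXdef⟩ : ∃ X : ℝ, X = ‖xbar - xt‖ ^ 2 := ⟨_, rfl⟩
  have hS0 : 0 ≤ S := by
    rw [hSdef]; exact Finset.sum_nonneg fun i _ => sq_nonneg _
  have hX0 : 0 ≤ X := by rw [hXdef]; positivity
  have hXsym : ‖xt - xbar‖ ^ 2 = X := by rw [hXdef, norm_sub_rev]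
  have hDe : ∀ i, D' yt i = w i + ev i := by
    intro i; rw [hgradD i]; simp only [hwdef, hevdef]; ring
  -- coordinates of the dual step
  have hyd : ∀ i, yprev i - yt i = if i ∈ I then -(δ * w i) else 0 := by
    intro i
    by_cases h : i ∈ I
    · simp only [h, if_true, hwdef]
      rw [hin i h]; ring
    · simp only [h, if_false]
      rw [hout i h]; ring
  have hdynorm : ‖yprev - yt‖ ^ 2 = δ ^ 2 * S := by
    rw [normsq_euc]
    calc ∑ i, ((yprev - yt) i) ^ 2
        = ∑ i, (if i ∈ I then δ ^ 2 * (w i) ^ 2 else 0) := by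
          refine Finset.sum_congr rfl fun i _ => ?_
          have hz : (yprev - yt) i = yprev i - yt i := by simp
          rw [hz, hyd i]
          split_ifs <;> ring
      _ = ∑ i ∈ I, δ ^ 2 * (w i) ^ 2 := by rw [Finset.sum_ite_mem, Finset.univ_inter]
      _ = δ ^ 2 * S := by rw [hSdef, Finset.mul_sum]
  have hinnerdy : ∀ z : EuclideanSpace ℝ (Fin n), ⟪z, yprev - yt⟫
      = -(δ * ∑ i ∈ I, z i * w i) := by
    intro z
    rw [inner_euc]
    calc ∑ i, z i * (yprev - yt) i
        = ∑ i, (if i ∈ I then -(δ * (z i * w i)) else 0) := by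
          refine Finset.sum_congr rfl fun i _ => ?_
          have hz : (yprev - yt) i = yprev i - yt i := by simp
          rw [hz, hyd i]
          split_ifs <;> ring
      _ = ∑ i ∈ I, -(δ * (z i * w i)) := by rw [Finset.sum_ite_mem, Finset.univ_inter]
      _ = -(δ * ∑ i ∈ I, z i * w i) := by rw [Finset.sum_neg_distrib, Finset.mul_sum]
  -- (F1) change of the Lagrangian under the dual step
  have hLch : Lag xt yt - Lag xt yprev ≤ δ * S + δ ^ 2 / (2 * α) * S := by
    have hdesc := descent_lemma_aux φ φ' hφdiff (1 / α) hφlip yt yprev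
    rw [hinnerdy (φ' yt), hdynorm] at hdesc
    have hld : Lag xt yt - Lag xt yprev
        = δ * (∑ i ∈ I, w i * ((1 / n : ℝ) * ⟪a i, xt⟫)) + (φ yprev - φ yt) := by
      rw [hLag xt yt, hLag xt yprev]
      have h1 : (1 / n : ℝ) * (∑ i, yt i * ⟪a i, xt⟫) - (1 / n : ℝ) * (∑ i, yprev i * ⟪a i, xt⟫)
          = δ * ∑ i ∈ I, w i * ((1 / n : ℝ) * ⟪a i, xt⟫) := by
        rw [← mul_sub, ← Finset.sum_sub_distrib]
        have h2 : ∀ i ∈ Finset.univ, yt i * ⟪a i, xt⟫ - yprev i * ⟪a i, xt⟫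
            = if i ∈ I then δ * (w i * ⟪a i, xt⟫) else 0 := by
          intro i _
          have h3 := hyd i
          by_cases h : i ∈ I
          · simp only [h, if_true] at h3 ⊢
            linear_combination (-(⟪a i, xt⟫)) * h3
          · simp only [h, if_false] at h3 ⊢
            linear_combination (-(⟪a i, xt⟫)) * h3
        rw [Finset.sum_congr rfl h2, Finset.sum_ite_mem, Finset.univ_inter, Finset.mul_sum,
          Finset.mul_sum]
        refine Finset.sum_congr rfl fun i _ => ?_
        ring
      linear_combination h1
    have hcombδ : δ * (∑ i ∈ I, w i * ((1 / n : ℝ) * ⟪a i, xt⟫))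
        - δ * (∑ i ∈ I, (φ' yt) i * w i) = δ * S := by
      rw [← mul_sub, ← Finset.sum_sub_distrib, hSdef]
      congr 1
      refine Finset.sum_congr rfl fun i _ => ?_
      simp only [hwdef]; ring
    obtain ⟨A, hA⟩ : ∃ A : ℝ, A = ∑ i ∈ I, w i * ((1 / n : ℝ) * ⟪a i, xt⟫) := ⟨_, rfl⟩
    obtain ⟨B, hB⟩ : ∃ B : ℝ, B = ∑ i ∈ I, (φ' yt) i * w i := ⟨_, rfl⟩
    rw [← hB] at hdesc
    rw [← hA] at hld
    rw [← hA, ← hB] at hcombδ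
    have hbr : (1 / α) / 2 * (δ ^ 2 * S) = δ ^ 2 / (2 * α) * S := by ring
    linarith only [hdesc, hld, hcombδ, hbr]
  -- (F2) dual progress
  have hDch : D yprev - D yt ≤ -δ * (S + T) - δ ^ 2 / (2 * β) * S := by
    have h := hDsc yt yprev
    rw [inner_neg_left, hinnerdy (D' yt), hdynorm] at h
    have hsum : ∑ i ∈ I, (D' yt) i * w i = S + T := by
      rw [hSdef, hTdef, ← Finset.sum_add_distrib]
      refine Finset.sum_congr rfl fun i _ => ?_
      rw [hDe i]; ring
    rw [hsum] at h
    have hbr : (1 / β) / 2 * (δ ^ 2 * S) = δ ^ 2 / (2 * β) * S := by ring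
    linarith only [h, hbr]
  -- (F6) Young inequality for the cross term
  have hT : -(2 * T) ≤ 1 / 2 * S + 2 * Ev := by
    have h := Finset.sum_le_sum (f := fun i => -(2 * (ev i * w i)))
      (g := fun i => 1 / 2 * (w i) ^ 2 + 2 * (ev i) ^ 2)
      (fun i (_ : i ∈ I) => by
        show -(2 * (ev i * w i)) ≤ 1 / 2 * (w i) ^ 2 + 2 * (ev i) ^ 2
        linarith only [sq_nonneg (w i + 2 * ev i)])
    rw [Finset.sum_add_distrib] at h
    simp only [Finset.sum_neg_distrib, ← Finset.mul_sum] at h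
    rw [hTdef, hSdef, hEvdef]
    linarith only [h]
  -- (F7) bound on Ev
  have hev1 : ∀ i, (ev i) ^ 2 ≤ R / (n : ℝ) ^ 2 * X := by
    intro i
    have h1 : ev i = (1 / n : ℝ) * ⟪a i, xbar - xt⟫ := by
      simp only [hevdef]; rw [inner_sub_right]; ring
    have h2 : |⟪a i, xbar - xt⟫| ≤ ‖a i‖ * ‖xbar - xt‖ := abs_real_inner_le_norm _ _
    have h3 : ⟪a i, xbar - xt⟫ ^ 2 ≤ ‖a i‖ ^ 2 * X := by
      rw [hXdef]
      nlinarith [h2, sq_abs (⟪a i, xbar - xt⟫), abs_nonneg (⟪a i, xbar - xt⟫),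
        norm_nonneg (a i), norm_nonneg (xbar - xt)]
    have h4 : ‖a i‖ ^ 2 * X ≤ R * X := mul_le_mul_of_nonneg_right (hR i) hX0
    calc (ev i) ^ 2 = (1 / n : ℝ) ^ 2 * ⟪a i, xbar - xt⟫ ^ 2 := by rw [h1]; ring
      _ ≤ (1 / n : ℝ) ^ 2 * (R * X) :=
          mul_le_mul_of_nonneg_left (le_trans h3 h4) (by positivity)
      _ = R / (n : ℝ) ^ 2 * X := by ring
  have hE : Ev ≤ (k : ℝ) * R / (n : ℝ) ^ 2 * X := by
    have h := Finset.sum_le_card_nsmul I (fun i => (ev i) ^ 2) (R / (n : ℝ) ^ 2 * X)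
      (fun i _ => hev1 i)
    rw [hI, nsmul_eq_mul] at h
    rw [hEvdef]
    calc ∑ i ∈ I, (ev i) ^ 2 ≤ (k : ℝ) * (R / (n : ℝ) ^ 2 * X) := h
      _ = (k : ℝ) * R / (n : ℝ) ^ 2 * X := by ring
  have hEall : ∑ i, (ev i) ^ 2 ≤ R / (n : ℝ) * X := by
    have h := Finset.sum_le_card_nsmul Finset.univ (fun i => (ev i) ^ 2)
      (R / (n : ℝ) ^ 2 * X) (fun i _ => hev1 i)
    rw [Finset.card_univ, Fintype.card_fin, nsmul_eq_mul] at h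
    calc ∑ i, (ev i) ^ 2 ≤ (n : ℝ) * (R / (n : ℝ) ^ 2 * X) := h
      _ = R / (n : ℝ) * X := by field_simp
  -- greedy property: full sum of w² is at most (n/k) S
  have hw2 : ∑ i, (w i) ^ 2 ≤ (n : ℝ) / (k : ℝ) * S := by
    have hIne : I.Nonempty := Finset.card_pos.1 (by rw [hI]; omega)
    obtain ⟨i₀, hi₀, hmin⟩ := I.exists_min_image (fun i => (w i) ^ 2) hIne
    have hgreedy' : ∀ J : Finset (Fin n), J.card = k → ∑ i ∈ J, (w i) ^ 2 ≤ S := by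
      intro J hJ
      rw [hSdef]
      simp only [hwdef]
      exact hgreedy J hJ
    have houtmin : ∀ j, j ∉ I → (w j) ^ 2 ≤ (w i₀) ^ 2 := by
      intro j hj
      have hjne : j ∉ I.erase i₀ := fun hmem => hj (Finset.mem_of_mem_erase hmem)
      have hjcard : (insert j (I.erase i₀)).card = k := by
        rw [Finset.card_insert_of_notMem hjne, Finset.card_erase_of_mem hi₀, hI]
        omega
      have h := hgreedy' _ hjcard
      rw [Finset.sum_insert hjne] at h
      have h2 : w i₀ ^ 2 + ∑ x ∈ I.erase i₀, w x ^ 2 = ∑ x ∈ I, w x ^ 2 :=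
        Finset.add_sum_erase I (fun i => (w i) ^ 2) hi₀
      rw [hSdef] at h
      linarith only [h, h2]
    have hcountI : (k : ℝ) * (w i₀) ^ 2 ≤ S := by
      have h := Finset.card_nsmul_le_sum I (fun i => (w i) ^ 2) ((w i₀) ^ 2)
        (fun i hi => hmin i hi)
      rw [hI, nsmul_eq_mul] at h
      rw [hSdef]; exact h
    have hcompl : ∑ i ∈ Iᶜ, (w i) ^ 2 ≤ ((n : ℝ) - (k : ℝ)) * (w i₀) ^ 2 := by
      have h := Finset.sum_le_card_nsmul Iᶜ (fun i => (w i) ^ 2) ((w i₀) ^ 2)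
        (fun i hi => houtmin i (Finset.mem_compl.1 hi))
      rw [Finset.card_compl, Fintype.card_fin, hI, nsmul_eq_mul] at h
      calc ∑ i ∈ Iᶜ, (w i) ^ 2 ≤ ((n - k : ℕ) : ℝ) * (w i₀) ^ 2 := h
        _ = ((n : ℝ) - (k : ℝ)) * (w i₀) ^ 2 := by rw [Nat.cast_sub hkn]
    have hsplit : ∑ i, (w i) ^ 2 = S + ∑ i ∈ Iᶜ, (w i) ^ 2 := by
      rw [hSdef]; exact (Finset.sum_add_sum_compl I _).symm
    have hnk : (k : ℝ) ≤ (n : ℝ) := by exact_mod_cast hkn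
    have hsq0 : 0 ≤ (w i₀) ^ 2 := sq_nonneg _
    have e0 : (k : ℝ) * (∑ i, (w i) ^ 2) = (k : ℝ) * S + (k : ℝ) * ∑ i ∈ Iᶜ, (w i) ^ 2 := by
      rw [hsplit]; ring
    have e1 : (k : ℝ) * (∑ i ∈ Iᶜ, (w i) ^ 2) ≤ (k : ℝ) * (((n : ℝ) - (k : ℝ)) * (w i₀) ^ 2) :=
      mul_le_mul_of_nonneg_left hcompl hkRe.le
    have e2 : ((n : ℝ) - (k : ℝ)) * ((k : ℝ) * (w i₀) ^ 2) ≤ ((n : ℝ) - (k : ℝ)) * S :=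
      mul_le_mul_of_nonneg_left hcountI (by linarith)
    rw [div_mul_eq_mul_div, le_div_iff₀ hkRe]
    linarith only [e0, e1, e2]
  -- (F3') dual gap bound
  have hgap : (k : ℝ) * δ / (2 * (n : ℝ) * β) * (Dstar - D yt)
      ≤ δ / 2 * S + (k : ℝ) * δ * R / (2 * (n : ℝ) ^ 2) * X := by
    obtain ⟨ys, hys⟩ := hDatt
    have h := hDsc yt ys
    rw [hys] at h
    have hip : -(‖D' yt‖ * ‖ys - yt‖) ≤ ⟪-D' yt, ys - yt⟫ := by
      rw [inner_neg_left]
      have h5 := real_inner_le_norm (D' yt) (ys - yt)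
      linarith only [h5]
    have hgap1 : Dstar - D yt ≤ β / 2 * ‖D' yt‖ ^ 2 := by
      have hkey : ‖D' yt‖ * ‖ys - yt‖ - (1 / β) / 2 * ‖ys - yt‖ ^ 2 ≤ β / 2 * ‖D' yt‖ ^ 2 := by
        have h2b : (0:ℝ) < 2 * β := by positivity
        have hzz : 2 * β * ((1 / β) / 2 * ‖ys - yt‖ ^ 2) = ‖ys - yt‖ ^ 2 := by
          field_simp
        have P : 2 * β * (‖D' yt‖ * ‖ys - yt‖ - (1 / β) / 2 * ‖ys - yt‖ ^ 2)
            ≤ 2 * β * (β / 2 * ‖D' yt‖ ^ 2) := by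
          linarith only [sq_nonneg (β * ‖D' yt‖ - ‖ys - yt‖), hzz]
        exact le_of_mul_le_mul_left P h2b
      linarith only [h, hip, hkey]
    have hnorm : ‖D' yt‖ ^ 2 = ∑ i, (w i + ev i) ^ 2 := by
      rw [normsq_euc]
      exact Finset.sum_congr rfl fun i _ => by rw [hDe i]
    have hsq : ∑ i, (w i + ev i) ^ 2 ≤ 2 * (∑ i, (w i) ^ 2) + 2 * (∑ i, (ev i) ^ 2) := by
      rw [Finset.mul_sum, Finset.mul_sum, ← Finset.sum_add_distrib]
      refine Finset.sum_le_sum fun i _ => ?_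
      have hsq2 := sq_nonneg (w i - ev i)
      linarith only [hsq2]
    have hfin : Dstar - D yt ≤ β * ((n : ℝ) / (k : ℝ) * S) + β * (R / (n : ℝ) * X) := by
      rw [hnorm] at hgap1
      have m1 : β / 2 * (∑ i, (w i + ev i) ^ 2)
          ≤ β / 2 * (2 * (∑ i, (w i) ^ 2) + 2 * (∑ i, (ev i) ^ 2)) :=
        mul_le_mul_of_nonneg_left hsq (by positivity)
      have m2 : β * (∑ i, (w i) ^ 2) ≤ β * ((n : ℝ) / (k : ℝ) * S) :=
        mul_le_mul_of_nonneg_left hw2 hβ.le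
      have m3 : β * (∑ i, (ev i) ^ 2) ≤ β * (R / (n : ℝ) * X) :=
        mul_le_mul_of_nonneg_left hEall hβ.le
      linarith only [hgap1, m1, m2, m3]
    have hc1 : (0:ℝ) ≤ (k : ℝ) * δ / (2 * (n : ℝ) * β) := by positivity
    calc (k : ℝ) * δ / (2 * (n : ℝ) * β) * (Dstar - D yt)
        ≤ (k : ℝ) * δ / (2 * (n : ℝ) * β) * (β * ((n : ℝ) / (k : ℝ) * S) + β * (R / (n : ℝ) * X)) :=
          mul_le_mul_of_nonneg_left hfin hc1
      _ = δ / 2 * S + (k : ℝ) * δ * R / (2 * (n : ℝ) ^ 2) * X := by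
          field_simp
  -- inner product expansions for the primal space
  have hvin : ∀ (u z : EuclideanSpace ℝ (Fin d)),
      ⟪u + (n : ℝ)⁻¹ • ∑ i, yt i • a i, z⟫
        = ⟪u, z⟫ + (1 / n : ℝ) * ∑ i, yt i * ⟪a i, z⟫ := by
    intro u z
    rw [inner_add_left, real_inner_smul_left, sum_inner]
    congr 1
    rw [one_div]
    congr 1
    exact Finset.sum_congr rfl fun i _ => real_inner_smul_left _ _ _
  have hLagd : ∀ x x' : EuclideanSpace ℝ (Fin d), Lag x yt - Lag x' yt
      = (g x - g x') + (1 / n : ℝ) * ∑ i, yt i * ⟪a i, x - x'⟫ := by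
    intro x x'
    rw [hLag x yt, hLag x' yt]
    have h1 : ∑ i, yt i * ⟪a i, x⟫ - ∑ i, yt i * ⟪a i, x'⟫ = ∑ i, yt i * ⟪a i, x - x'⟫ := by
      rw [← Finset.sum_sub_distrib]
      refine Finset.sum_congr rfl fun i _ => ?_
      rw [inner_sub_right]; ring
    linear_combination ((1 : ℝ) / n) * h1
  -- (F5) primal gap lower bound
  have hPh : μ / 2 * X ≤ Lag xt yt - D yt := by
    obtain ⟨c, hc⟩ : ∃ c : EuclideanSpace ℝ (Fin d),
        c = g' xbar + (n : ℝ)⁻¹ • ∑ i, yt i • a i := ⟨_, rfl⟩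
    have hvin2 : ∀ z : EuclideanSpace ℝ (Fin d),
        ⟪c, z⟫ = ⟪g' xbar, z⟫ + (1 / n : ℝ) * ∑ i, yt i * ⟪a i, z⟫ := by
      intro z; rw [hc]; exact hvin (g' xbar) z
    have hopt : 0 ≤ ⟪c, xt - xbar⟫ := by
      have hkey : ∀ s : ℝ, 0 < s → s ≤ 1 →
          0 ≤ s * ⟪c, xt - xbar⟫ + L * s ^ 2 / 2 * X := by
        intro s hs hs1
        have heq : xbar + s • (xt - xbar) = (1 - s) • xbar + s • xt := by module
        have hmem : xbar + s • (xt - xbar) ∈ C := by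
          rw [heq]
          exact hCconv hxbarC hxtC (by linarith) hs.le (by ring)
        have hmin : Lag xbar yt ≤ Lag (xbar + s • (xt - xbar)) yt := by
          rw [← hxbarD]
          exact (hD yt).2 ⟨_, hmem, rfl⟩
        have hsub : (xbar + s • (xt - xbar)) - xbar = s • (xt - xbar) := by module
        have hsmg := hgsm xbar (xbar + s • (xt - xbar))
        rw [hsub] at hsmg
        have hLd := hLagd (xbar + s • (xt - xbar)) xbar
        rw [hsub] at hLd
        have hipc := hvin2 (s • (xt - xbar))
        have hsm2 : ⟪c, s • (xt - xbar)⟫ = s * ⟪c, xt - xbar⟫ :=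
          real_inner_smul_right _ _ _
        have hns : ‖s • (xt - xbar)‖ ^ 2 = s ^ 2 * X := by
          rw [norm_smul, Real.norm_eq_abs, mul_pow, sq_abs, hXsym]
        rw [hns] at hsmg
        linarith only [hmin, hsmg, hLd, hipc, hsm2]
      by_contra hcon
      push_neg at hcon
      rcases eq_or_lt_of_le hX0 with hXz | hXp
      · have h := hkey 1 one_pos le_rfl
        rw [← hXz] at h
        linarith only [hcon, h]
      · obtain ⟨s, hsdef⟩ : ∃ s : ℝ, s = min 1 (-⟪c, xt - xbar⟫ / (L * X)) := ⟨_, rfl⟩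
        have hs0 : 0 < s := by
          rw [hsdef]
          exact lt_min one_pos (div_pos (neg_pos.2 hcon) (mul_pos hL0 hXp))
        have hs1 : s ≤ 1 := by rw [hsdef]; exact min_le_left _ _
        have hs2 : s ≤ -⟪c, xt - xbar⟫ / (L * X) := by rw [hsdef]; exact min_le_right _ _
        have h := hkey s hs0 hs1
        have h3 : s * (L * X) ≤ -⟪c, xt - xbar⟫ := by
          rw [le_div_iff₀ (mul_pos hL0 hXp)] at hs2
          linarith only [hs2]
        have h4 : s * (s * (L * X)) ≤ s * (-⟪c, xt - xbar⟫) :=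
          mul_le_mul_of_nonneg_left h3 hs0.le
        linarith only [h, h4, mul_pos hs0 (neg_pos.2 hcon)]
    have hsc := hgsc xbar xt
    have hLd := hLagd xt xbar
    have hipd := hvin2 (xt - xbar)
    rw [hxbarD]
    rw [hXsym] at hsc
    linarith only [hsc, hLd, hipd, hopt]
  -- (F4) primal progress
  have hP : Lag xnext yt - Lag xt yt
      ≤ -η * (Lag xt yt - D yt) - η * μ / 4 * X := by
    obtain ⟨v, hv⟩ : ∃ v : EuclideanSpace ℝ (Fin d),
        v = g' xt + (n : ℝ)⁻¹ • ∑ i, yt i • a i := ⟨_, rfl⟩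
    rw [← hv] at hfw
    have hvin1 : ∀ z : EuclideanSpace ℝ (Fin d),
        ⟪v, z⟫ = ⟪g' xt, z⟫ + (1 / n : ℝ) * ∑ i, yt i * ⟪a i, z⟫ := by
      intro z; rw [hv]; exact hvin (g' xt) z
    have hxd : xnext - xt = η • (xtil - xt) := by rw [hxnext]; module
    have hLη : L * η = μ / 2 := by rw [hη]; field_simp
    have hsmg := hgsm xt xnext
    have hLd := hLagd xnext xt
    have hip1 := hvin1 (xnext - xt)
    have p1 : Lag xnext yt - Lag xt yt
        ≤ ⟪v, xnext - xt⟫ + L / 2 * ‖xnext - xt‖ ^ 2 := by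
      linarith only [hsmg, hLd, hip1]
    rw [hxd] at p1
    have hsm : ⟪v, η • (xtil - xt)⟫ = η * ⟪v, xtil - xt⟫ :=
      real_inner_smul_right _ _ _
    have hns : ‖η • (xtil - xt)‖ ^ 2 = η ^ 2 * ‖xtil - xt‖ ^ 2 := by
      rw [norm_smul, Real.norm_eq_abs, mul_pow, sq_abs]
    rw [hsm, hns] at p1
    have hfw2 : ⟪v, xtil - xt⟫ + L * η / 2 * ‖xtil - xt‖ ^ 2
        ≤ ⟪v, xbar - xt⟫ + L * η / 2 * X := by
      have e1 : ⟪v, xtil - xt⟫ = ⟪v, xtil⟫ - ⟪v, xt⟫ := inner_sub_right v xtil xt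
      have e2 : ⟪v, xbar - xt⟫ = ⟪v, xbar⟫ - ⟪v, xt⟫ := inner_sub_right v xbar xt
      rw [hXdef]
      linarith only [hfw, e1, e2]
    have hp2 : η * (⟪v, xtil - xt⟫ + L * η / 2 * ‖xtil - xt‖ ^ 2)
        ≤ η * (⟪v, xbar - xt⟫ + L * η / 2 * X) :=
      mul_le_mul_of_nonneg_left hfw2 hη0.le
    have hxbb : ⟪v, xbar - xt⟫ ≤ -(Lag xt yt - D yt) - μ / 2 * X := by
      have hsc := hgsc xt xbar
      have hLd2 := hLagd xbar xt
      have hip2 := hvin1 (xbar - xt)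
      rw [hxbarD]
      rw [← hXdef] at hsc
      linarith only [hsc, hLd2, hip2]
    have hLX : L * η / 2 * X = μ / 4 * X := by rw [hLη]; ring
    have hp3 : η * (⟪v, xbar - xt⟫ + L * η / 2 * X)
        ≤ η * (-(Lag xt yt - D yt) - μ / 2 * X + μ / 4 * X) := by
      apply mul_le_mul_of_nonneg_left _ hη0.le
      linarith only [hxbb, hLX]
    linarith only [p1, hp2, hp3]
  -- final assembly
  exact final_arith S X T Ev η μ L α β δ (k : ℝ) (n : ℝ) R
    (D yt) (D yprev) Dstar (Lag xt yt) (Lag xt yprev) (Lag xnext yt)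
    hμ hμL hβ hα hαβ hδ hη hq hkRe hnR hR0 hS0 hX0 hLch hDch hT hE hgap hP hPh
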